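/- With F = F(a₀,a₁), θ the automorphism with θ(a₀)=a₁, θ(a₁)=a₁a₀⁻¹a₁, and N the submonoid of F generated by {θ^i(a₀) : i ∈ ℤ}: membership in N is decidable; in fact an element γ ∈ F lies in N if and only if γ is a product of elements of the orbit each of whose reduced lengths is at most the reduced length of γ, and there are only finitely many such candidate products to check. -/

import Mathlib

namespace Stmt13

open FreeGroup List

abbrev a0 : FreeGroup Bool := FreeGroup.of false
abbrev a1 : FreeGroup Bool := FreeGroup.of true
abbrev gg : FreeGroup Bool := a1 * a0⁻¹

/-- combined relation: reducedness + "no two consecutive negative letters" -/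
def Rel (a b : Bool × Bool) : Prop :=
  ¬(a.1 = b.1 ∧ a.2 = !b.2) ∧ (a.2 = false → b.2 = true)

def Good (w : List (Bool × Bool)) : Prop :=
  List.Chain' Rel w ∧ (∀ p ∈ w.head?, p.2 = true) ∧ (∀ p ∈ w.getLast?, p.2 = true)

theorem good_nil : Good [] := ⟨List.isChain_nil, by simp, by simp⟩

theorem reduce_eq_self {w : List (Bool × Bool)}
    (h : List.Chain' (fun a b => ¬(a.1 = b.1 ∧ a.2 = !b.2)) w) :
    FreeGroup.reduce w = w := by
  induction w with
  | nil => rfl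
  | cons x t ih =>
    unfold List.Chain' at h; rw [List.isChain_cons] at h
    rw [FreeGroup.reduce.cons, ih h.2]
    cases t with
    | nil => rfl
    | cons y t' =>
      have hne := h.1 y (by simp)
      show (if x.1 = y.1 ∧ x.2 = !y.2 then t' else x :: y :: t') = x :: y :: t'
      rw [if_neg hne]

theorem Good.reduce {w : List (Bool × Bool)} (h : Good w) : FreeGroup.reduce w = w :=
  reduce_eq_self (h.1.imp (fun _ _ hab => hab.1))


theorem Good.append {u v : List (Bool × Bool)} (hu : Good u) (hv : Good v) :
    Good (u ++ v) := by
  obtain ⟨cu, hu1, hu2⟩ := hu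
  obtain ⟨cv, hv1, hv2⟩ := hv
  refine ⟨List.isChain_append.2 ⟨cu, cv, ?_⟩, ?_, ?_⟩
  · intro x hx y hy
    have hx2 := hu2 x hx
    have hy2 := hv1 y hy
    constructor
    · rintro ⟨-, h2⟩; rw [hx2, hy2] at h2; simp at h2
    · intro h; rw [h] at hx2; simp at hx2
  · intro p hp
    rcases u with _ | ⟨x, t⟩
    · exact hv1 p (by simpa using hp)
    · exact hu1 p (by simpa using hp)
  · intro p hp
    rcases v.eq_nil_or_concat with rfl | ⟨t, x, rfl⟩
    · exact hu2 p (by simpa using hp)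
    · have : (u ++ t.concat x).getLast? = some x := by
        rw [List.concat_eq_append, ← List.append_assoc, List.getLast?_concat]
      rw [this] at hp
      exact hv2 p (by rw [List.concat_eq_append, List.getLast?_concat]; exact hp)

/-- block word for `gg^k * a1` -/
def Wp : ℕ → List (Bool × Bool)
  | 0 => [(true, true)]
  | k + 1 => (true, true) :: (false, false) :: Wp k

/-- block word for `gg^(-(k+1)) * a1` -/
def Wm : ℕ → List (Bool × Bool)
  | 0 => [(false, true)]
  | k + 1 => (false, true) :: (true, false) :: Wm k

theorem Wp_ne_nil (k : ℕ) : Wp k ≠ [] := by cases k <;> simp [Wp]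
theorem Wm_ne_nil (k : ℕ) : Wm k ≠ [] := by cases k <;> simp [Wm]

theorem head?_Wp (k : ℕ) : (Wp k).head? = some (true, true) := by cases k <;> rfl
theorem head?_Wm (k : ℕ) : (Wm k).head? = some (false, true) := by cases k <;> rfl

theorem good_Wp (k : ℕ) : Good (Wp k) := by
  induction k with
  | zero => refine ⟨by simp only [Wp]; exact List.isChain_singleton _, by simp [Wp], by simp [Wp]⟩
  | succ k ih =>
    obtain ⟨c, h1, h2⟩ := ih
    refine ⟨?_, by simp [Wp], ?_⟩
    · rw [Wp]; unfold List.Chain'; rw [List.isChain_cons, List.isChain_cons]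
      refine ⟨by simp [Rel], ⟨?_, c⟩⟩
      intro y hy
      rw [head?_Wp k] at hy
      simp at hy
      simp [← hy, Rel]
    · intro p hp
      obtain ⟨q, t, hqt⟩ := List.exists_cons_of_ne_nil (Wp_ne_nil k)
      rw [Wp, hqt, List.getLast?_cons_cons, List.getLast?_cons_cons] at hp
      exact h2 p (by rw [hqt]; exact hp)
  
theorem good_Wm (k : ℕ) : Good (Wm k) := by
  induction k with
  | zero => refine ⟨by simp only [Wm]; exact List.isChain_singleton _, by simp [Wm], by simp [Wm]⟩
  | succ k ih =>
    obtain ⟨c, h1, h2⟩ := ih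
    refine ⟨?_, by simp [Wm], ?_⟩
    · rw [Wm]; unfold List.Chain'; rw [List.isChain_cons, List.isChain_cons]
      refine ⟨by simp [Rel], ⟨?_, c⟩⟩
      intro y hy
      rw [head?_Wm k] at hy
      simp at hy
      simp [← hy, Rel]
    · intro p hp
      obtain ⟨q, t, hqt⟩ := List.exists_cons_of_ne_nil (Wm_ne_nil k)
      rw [Wm, hqt, List.getLast?_cons_cons, List.getLast?_cons_cons] at hp
      exact h2 p (by rw [hqt]; exact hp)

theorem of_eq_mk (x : Bool) : FreeGroup.of x = FreeGroup.mk [(x, true)] := rfl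

theorem mk_Wp (k : ℕ) : FreeGroup.mk (Wp k) = gg ^ (k : ℤ) * a1 := by
  induction k with
  | zero => simp [Wp, of_eq_mk]
  | succ k ih =>
    have : Wp (k + 1) = [(true, true), (false, false)] ++ Wp k := rfl
    rw [this, ← FreeGroup.mul_mk, ih]
    have hg : FreeGroup.mk [(true, true), (false, false)] = gg := by
      rw [show [((true : Bool), true), ((false : Bool), false)] =
        [((true : Bool), true)] ++ [((false : Bool), false)] from rfl, ← FreeGroup.mul_mk]
      rw [← of_eq_mk]
      have h2 : FreeGroup.mk [((false : Bool), false)] = a0⁻¹ := by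
        show _ = (FreeGroup.mk [((false : Bool), true)])⁻¹
        rw [FreeGroup.inv_mk]; rfl
      rw [h2]
    rw [hg, ← mul_assoc, ← zpow_one_add]
    have hc : (1 + (k : ℤ)) = ((k + 1 : ℕ) : ℤ) := by push_cast; ring
    rw [hc]

theorem mk_Wm (k : ℕ) : FreeGroup.mk (Wm k) = gg ^ (-(k + 1) : ℤ) * a1 := by
  induction k with
  | zero =>
    show FreeGroup.mk [(false, true)] = (a1 * a0⁻¹) ^ (-1 : ℤ) * a1
    rw [zpow_neg_one, mul_inv_rev, inv_inv, mul_assoc, inv_mul_cancel, mul_one, ← of_eq_mk]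
  | succ k ih =>
    have : Wm (k + 1) = [(false, true), (true, false)] ++ Wm k := rfl
    rw [this, ← FreeGroup.mul_mk, ih]
    have hg : FreeGroup.mk [(false, true), (true, false)] = gg⁻¹ := by
      rw [show [((false : Bool), true), ((true : Bool), false)] =
        [((false : Bool), true)] ++ [((true : Bool), false)] from rfl, ← FreeGroup.mul_mk]
      rw [← of_eq_mk]
      have h2 : FreeGroup.mk [((true : Bool), false)] = a1⁻¹ := by
        show _ = (FreeGroup.mk [((true : Bool), true)])⁻¹
        rw [FreeGroup.inv_mk]; rfl
      rw [h2, show (a0 * a1⁻¹ : FreeGroup Bool) = (a1 * a0⁻¹)⁻¹ from by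
        rw [mul_inv_rev, inv_inv]]
    rw [hg, ← mul_assoc, ← zpow_neg_one, ← zpow_add]
    congr 2
    push_cast
    ring

theorem orbit_repr (n : ℤ) :
    ∃ k : ℕ, gg ^ n * a1 = FreeGroup.mk (Wp k) ∨ gg ^ n * a1 = FreeGroup.mk (Wm k) := by
  cases n with
  | ofNat k => exact ⟨k, Or.inl (mk_Wp k).symm⟩
  | negSucc k =>
    refine ⟨k, Or.inr ?_⟩
    rw [mk_Wm, Int.negSucc_eq]

theorem orbit_good (n : ℤ) :
    Good ((gg ^ n * a1).toWord) ∧ (gg ^ n * a1).toWord ≠ [] := by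
  obtain ⟨k, h | h⟩ := orbit_repr n
  · rw [h, FreeGroup.toWord_mk, (good_Wp k).reduce]
    exact ⟨good_Wp k, Wp_ne_nil k⟩
  · rw [h, FreeGroup.toWord_mk, (good_Wm k).reduce]
    exact ⟨good_Wm k, Wm_ne_nil k⟩

section Theta

variable (θ : MulAut (FreeGroup Bool))
    (h0 : θ (FreeGroup.of false) = FreeGroup.of true)
    (h1 : θ (FreeGroup.of true) =
      FreeGroup.of true * (FreeGroup.of false)⁻¹ * FreeGroup.of true)

include h0 h1

theorem theta_g : θ gg = gg := by
  show θ (a1 * a0⁻¹) = a1 * a0⁻¹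
  rw [_root_.map_mul, _root_.map_inv, h0, h1]
  group

theorem theta_step (m : ℤ) : θ (gg ^ m * a1) = gg ^ (m + 1) * a1 := by
  rw [_root_.map_mul, _root_.map_zpow, theta_g θ h0 h1, h1, zpow_add_one]
  show gg ^ m * (a1 * a0⁻¹ * a1) = gg ^ m * gg * a1
  simp [mul_assoc]

theorem orbit_eq (i : ℤ) : (θ ^ i) a0 = gg ^ (i - 1) * a1 := by
  induction i using Int.induction_on with
  | zero =>
    show a0 = gg ^ ((0 : ℤ) - 1) * a1
    rw [show ((0 : ℤ) - 1) = -1 from by ring, zpow_neg_one]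
    show a0 = (a1 * a0⁻¹)⁻¹ * a1
    rw [mul_inv_rev, inv_inv, mul_assoc, inv_mul_cancel, mul_one]
  | succ i ih =>
    rw [show ((i : ℤ) + 1) = 1 + i from by ring, zpow_add, zpow_one, MulAut.mul_apply, ih,
      theta_step θ h0 h1]
    ring_nf
  | pred i ih =>
    apply θ.injective
    rw [theta_step θ h0 h1, ← MulAut.mul_apply, ← zpow_one_add,
      show (1 + (-(i : ℤ) - 1)) = -(i : ℤ) from by ring, ih,
      show (-(i : ℤ) - 1 - 1 + 1) = -(i : ℤ) - 1 from by ring]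

theorem range_eq :
    (Set.range fun i : ℤ => (θ ^ i) a0) = Set.range fun n : ℤ => gg ^ n * a1 := by
  ext x
  constructor
  · rintro ⟨i, rfl⟩
    exact ⟨i - 1, (orbit_eq θ h0 h1 i).symm⟩
  · rintro ⟨n, rfl⟩
    refine ⟨n + 1, ?_⟩
    show (θ ^ (n + 1)) a0 = gg ^ n * a1
    rw [orbit_eq θ h0 h1]
    norm_num

end Theta

theorem prod_good : ∀ l : List (FreeGroup Bool), (∀ e ∈ l, Good e.toWord) →
    (l.prod).toWord = (l.map FreeGroup.toWord).flatten ∧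
      Good ((l.map FreeGroup.toWord).flatten) := by
  intro l
  induction l with
  | nil => intro _; exact ⟨FreeGroup.toWord_one, by simpa using good_nil⟩
  | cons e t ih =>
    intro h
    obtain ⟨iht, ihg⟩ := ih fun x hx => h x (List.mem_cons_of_mem e hx)
    have he : Good e.toWord := h e (List.mem_cons_self)
    have hgood : Good (e.toWord ++ (t.map FreeGroup.toWord).flatten) := he.append ihg
    constructor
    · rw [List.prod_cons, ← FreeGroup.mk_toWord (x := e),
        ← FreeGroup.mk_toWord (x := t.prod), FreeGroup.mul_mk, FreeGroup.toWord_mk, iht,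
        hgood.reduce]
      simp
    · simpa using hgood
def N' : Submonoid (FreeGroup Bool) :=
  Submonoid.closure (Set.range fun n : ℤ => gg ^ n * a1)

theorem mem_N'_iff {γ : FreeGroup Bool} :
    γ ∈ N' ↔ ∃ l : List (FreeGroup Bool),
      (∀ e ∈ l, ∃ n : ℤ, gg ^ n * a1 = e) ∧ l.prod = γ := by
  constructor
  · intro h
    obtain ⟨l, hl, hp⟩ := Submonoid.exists_list_of_mem_closure h
    exact ⟨l, fun e he => hl e he, hp⟩
  · rintro ⟨l, hl, rfl⟩
    exact Submonoid.list_prod_mem _ fun x hx => Submonoid.subset_closure (hl x hx)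

theorem len_le_sum : ∀ L : List ℕ, (∀ x ∈ L, 1 ≤ x) → L.length ≤ L.sum := by
  intro L
  induction L with
  | nil => simp
  | cons a t ih =>
    intro h
    have h1 := h a (List.mem_cons_self)
    have := ih fun x hx => h x (List.mem_cons_of_mem a hx)
    simp only [List.length_cons, List.sum_cons]
    omega

theorem orbit_flatten {l : List (FreeGroup Bool)} (hl : ∀ e ∈ l, ∃ n : ℤ, gg ^ n * a1 = e) :
    (l.prod).toWord = (l.map FreeGroup.toWord).flatten := by
  refine (prod_good l fun e he => ?_).1
  obtain ⟨n, rfl⟩ := hl e he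
  exact (orbit_good n).1

theorem factor_len_le {l : List (FreeGroup Bool)} (hl : ∀ e ∈ l, ∃ n : ℤ, gg ^ n * a1 = e)
    {e : FreeGroup Bool} (he : e ∈ l) : e.toWord.length ≤ (l.prod).toWord.length := by
  rw [orbit_flatten hl, List.length_flatten]
  have : e.toWord.length ∈ ((l.map FreeGroup.toWord).map List.length) := by
    simp only [List.map_map]
    exact List.mem_map_of_mem he
  exact List.single_le_sum (fun x _ => Nat.zero_le x) _ this

theorem list_len_le {l : List (FreeGroup Bool)} (hl : ∀ e ∈ l, ∃ n : ℤ, gg ^ n * a1 = e) :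
    l.length ≤ (l.prod).toWord.length := by
  rw [orbit_flatten hl, List.length_flatten]
  have hlen : l.length = ((l.map FreeGroup.toWord).map List.length).length := by simp
  rw [hlen]
  apply len_le_sum
  intro x hx
  simp only [List.map_map, List.mem_map] at hx
  obtain ⟨e, he, rfl⟩ := hx
  obtain ⟨n, rfl⟩ := hl e he
  have := (orbit_good n).2
  simp only [Function.comp_apply]
  exact Nat.one_le_iff_ne_zero.2 (by simpa [List.length_eq_zero_iff] using this)

theorem finite_lists {A : Type*} {s : Set A} (hs : s.Finite) :
    ∀ n : ℕ, {l : List A | l.length ≤ n ∧ ∀ x ∈ l, x ∈ s}.Finite := by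
  intro n
  induction n with
  | zero =>
    refine Set.Finite.subset (Set.finite_singleton []) ?_
    rintro l ⟨hl, -⟩
    simp [List.length_eq_zero_iff.1 (Nat.le_zero.1 hl)]
  | succ n ih =>
    refine Set.Finite.subset (((hs.prod ih).image fun p => p.1 :: p.2).insert []) ?_
    rintro l ⟨hl, hmem⟩
    cases l with
    | nil => exact Set.mem_insert _ _
    | cons a t =>
      refine Set.mem_insert_of_mem _ ⟨(a, t), ⟨hmem a (List.mem_cons_self),
        ⟨?_, fun x hx => hmem x (List.mem_cons_of_mem a hx)⟩⟩, rfl⟩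
      simpa using Nat.succ_le_succ_iff.1 hl

theorem candidates_finite (γ : FreeGroup Bool) :
    {l : List (FreeGroup Bool) |
      (∀ e ∈ l, (∃ n : ℤ, gg ^ n * a1 = e) ∧ e.toWord.length ≤ γ.toWord.length) ∧
        l.prod = γ}.Finite := by
  set L := γ.toWord.length with hL
  have hT : ({w : List (Bool × Bool) | w.length ≤ L ∧ ∀ x ∈ w, x ∈ (Set.univ : Set (Bool × Bool))}).Finite :=
    finite_lists Set.finite_univ L
  have hE : ({e : FreeGroup Bool | e.toWord.length ≤ L}).Finite := by
    have : {e : FreeGroup Bool | e.toWord.length ≤ L} =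
        FreeGroup.toWord ⁻¹' {w | w.length ≤ L ∧ ∀ x ∈ w, x ∈ (Set.univ : Set (Bool × Bool))} := by
      ext e; simp
    rw [this]
    exact Set.Finite.preimage FreeGroup.toWord_injective.injOn hT
  refine Set.Finite.subset (finite_lists hE L) ?_
  rintro l ⟨hm, rfl⟩
  refine ⟨list_len_le fun e he => (hm e he).1, fun e he => (hm e he).2⟩
def RedR (a b : Bool × Bool) : Prop := ¬(a.1 = b.1 ∧ a.2 = !b.2)

def SRel (a b : Bool × Bool) : Prop := a.2 = false → b.2 = true

def Cond (r : List (Bool × Bool)) : Prop :=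
  (∀ p ∈ r.head?, p.2 = true) ∧ (∀ p ∈ r.getLast?, p.2 = true) ∧ List.Chain' SRel r

theorem Good.cond {w : List (Bool × Bool)} (h : Good w) : Cond w :=
  ⟨h.2.1, h.2.2, h.1.imp fun _ _ hab => hab.2⟩

theorem chain'_of_no_infix :
    ∀ M : List (Bool × Bool),
      (∀ (L₁ L₂ : List (Bool × Bool)) (x : Bool) (b : Bool),
        M ≠ L₁ ++ (x, b) :: (x, !b) :: L₂) → List.Chain' RedR M := by
  intro M
  induction M with
  | nil => intro _; exact List.isChain_nil
  | cons a t ih =>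
    intro h
    unfold List.Chain'; rw [List.isChain_cons]
    constructor
    · intro y hy
      cases t with
      | nil => simp at hy
      | cons c t' =>
        have hyc : y = c := by
          simp only [List.head?_cons, Option.mem_some_iff] at hy
          first
          | exact hy
          | exact hy.symm
        subst hyc
        intro hcon
        obtain ⟨h1, h2⟩ := hcon
        apply h [] t' a.1 a.2
        have hc : y = (a.1, !a.2) := by
          obtain ⟨y1, y2⟩ := y
          obtain ⟨aa1, aa2⟩ := a
          simp_all
        rw [hc, List.nil_append]
    · exact ih fun L₁ L₂ x b hh => h (a :: L₁) L₂ x b (by rw [List.cons_append, hh])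

theorem reduce_chain' (L : List (Bool × Bool)) : List.Chain' RedR (FreeGroup.reduce L) := by
  apply chain'_of_no_infix
  intro L₁ L₂ x b h
  exact FreeGroup.reduce.not h

theorem parse : ∀ (n : ℕ) (r : List (Bool × Bool)), r.length ≤ n →
    List.Chain' RedR r → Cond r →
    ∃ L : List (List (Bool × Bool)),
      (∀ w ∈ L, ∃ k : ℕ, w = Wp k ∨ w = Wm k) ∧ L.flatten = r := by
  intro n
  induction n with
  | zero =>
    intro r hr _ _
    rw [List.length_eq_zero_iff.1 (Nat.le_zero.1 hr)]
    exact ⟨[], by simp, rfl⟩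
  | succ n ih =>
    intro r hr hred hcond
    obtain ⟨hhead, hlast, hchain⟩ := hcond
    cases r with
    | nil => exact ⟨[], by simp, rfl⟩
    | cons a r₁ =>
      obtain ⟨x, b⟩ := a
      have hb : b = true := hhead (x, b) (by simp)
      subst hb
      cases r₁ with
      | nil =>
        refine ⟨[[(x, true)]], ?_, by simp⟩
        rintro w hw
        simp at hw
        subst hw
        cases x
        · exact ⟨0, Or.inr rfl⟩
        · exact ⟨0, Or.inl rfl⟩
      | cons c r₂ =>
        obtain ⟨y, d⟩ := c
        cases d
        · -- second letter negative
          have hxy : y = !x := by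
            have := (List.isChain_cons.1 hred).1 (y, false) (by simp)
            simp only [RedR, not_and] at this
            cases x <;> cases y <;> simp_all
          -- r₂ nonempty
          cases r₂ with
          | nil =>
            exfalso
            have := hlast (y, false) (by simp [List.getLast?_cons_cons])
            simp at this
          | cons e r₃ =>
            obtain ⟨z, f⟩ := e
            have hf : f = true := by
              have := (List.isChain_cons.1 (List.isChain_cons.1 hchain).2).1 (z, f) (by simp)
              exact this rfl
            subst hf
            have hz : x = z := by
              have := (List.isChain_cons.1 (List.isChain_cons.1 hred).2).1 (z, true) (by simp)
              simp only [RedR, not_and] at this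
              subst hxy
              cases x <;> cases z <;> simp_all
            subst hz
            -- apply IH to r₂ = (x,true) :: r₃
            have hlen : ((x, true) :: r₃).length ≤ n := by
              simp only [List.length_cons] at hr ⊢
              omega
            have hred₂ : List.Chain' RedR ((x, true) :: r₃) :=
              (List.isChain_cons.1 (List.isChain_cons.1 hred).2).2
            have hcond₂ : Cond ((x, true) :: r₃) := by
              refine ⟨by simp, ?_, (List.isChain_cons.1 (List.isChain_cons.1 hchain).2).2⟩
              intro p hp
              apply hlast
              rw [List.getLast?_cons_cons, List.getLast?_cons_cons]
              exact hp
            obtain ⟨L, hLmem, hLflat⟩ := ih ((x, true) :: r₃) hlen hred₂ hcond₂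
            cases L with
            | nil => simp at hLflat
            | cons B L' =>
              obtain ⟨k, hB | hB⟩ := hLmem B (List.mem_cons_self)
              · -- B = Wp k, so head of B is (true,true), hence x = true
                have hx : x = true := by
                  obtain ⟨q, t, hqt⟩ := List.exists_cons_of_ne_nil (Wp_ne_nil k)
                  rw [List.flatten_cons, hB, hqt] at hLflat
                  have : q = (x, true) := by
                    have := congrArg List.head? hLflat
                    simpa using this
                  have hq : q = (true, true) := by
                    have := congrArg List.head? hqt
                    rw [head?_Wp k] at this
                    simpa using this.symm
                  rw [hq] at this
                  exact (Prod.mk.injEq _ _ _ _ ▸ this.symm).1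
                subst hx
                refine ⟨Wp (k + 1) :: L', ?_, ?_⟩
                · intro w hw
                  rcases List.mem_cons.1 hw with rfl | hw
                  · exact ⟨k + 1, Or.inl rfl⟩
                  · exact hLmem w (List.mem_cons_of_mem _ hw)
                · rw [List.flatten_cons, Wp]
                  rw [List.flatten_cons, hB] at hLflat
                  simp only [List.cons_append, hLflat]
                  simp [hxy]
              · -- B = Wm k, head (false,true), hence x = false
                have hx : x = false := by
                  obtain ⟨q, t, hqt⟩ := List.exists_cons_of_ne_nil (Wm_ne_nil k)
                  rw [List.flatten_cons, hB, hqt] at hLflat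
                  have : q = (x, true) := by
                    have := congrArg List.head? hLflat
                    simpa using this
                  have hq : q = (false, true) := by
                    have := congrArg List.head? hqt
                    rw [head?_Wm k] at this
                    simpa using this.symm
                  rw [hq] at this
                  exact (Prod.mk.injEq _ _ _ _ ▸ this.symm).1
                subst hx
                refine ⟨Wm (k + 1) :: L', ?_, ?_⟩
                · intro w hw
                  rcases List.mem_cons.1 hw with rfl | hw
                  · exact ⟨k + 1, Or.inr rfl⟩
                  · exact hLmem w (List.mem_cons_of_mem _ hw)
                · rw [List.flatten_cons, Wm]
                  rw [List.flatten_cons, hB] at hLflat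
                  simp only [List.cons_append, hLflat]
                  simp [hxy]
        · -- second letter positive: peel single-letter block
          have hlen : ((y, true) :: r₂).length ≤ n := by
            simp only [List.length_cons] at hr ⊢
            omega
          have hcond₂ : Cond ((y, true) :: r₂) := by
            refine ⟨by simp, ?_, (List.isChain_cons.1 hchain).2⟩
            intro p hp
            apply hlast
            rw [List.getLast?_cons_cons]
            exact hp
          obtain ⟨L, hLmem, hLflat⟩ := ih ((y, true) :: r₂) hlen
            (List.isChain_cons.1 hred).2 hcond₂
          refine ⟨[(x, true)] :: L, ?_, by simp [hLflat]⟩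
          intro w hw
          rcases List.mem_cons.1 hw with rfl | hw
          · cases x
            · exact ⟨0, Or.inr rfl⟩
            · exact ⟨0, Or.inl rfl⟩
          · exact hLmem w hw

theorem mk_flatten : ∀ L : List (List (Bool × Bool)),
    FreeGroup.mk L.flatten = (L.map FreeGroup.mk).prod := by
  intro L
  induction L with
  | nil => simp [← FreeGroup.one_eq_mk]
  | cons B L' ih => rw [List.flatten_cons, ← FreeGroup.mul_mk, ih, List.map_cons, List.prod_cons]

theorem mem_N'_iff_cond (w : List (Bool × Bool)) :
    FreeGroup.mk w ∈ N' ↔ Cond (FreeGroup.reduce w) := by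
  constructor
  · intro h
    obtain ⟨l, hl, hp⟩ := mem_N'_iff.1 h
    have hflat := orbit_flatten hl
    rw [hp] at hflat
    have hgood : Good ((FreeGroup.mk w).toWord) := by
      rw [hflat]
      refine (prod_good l fun e he => ?_).2
      obtain ⟨n, rfl⟩ := hl e he
      exact (orbit_good n).1
    rw [FreeGroup.toWord_mk] at hgood
    exact hgood.cond
  · intro h
    obtain ⟨L, hLmem, hLflat⟩ := parse (FreeGroup.reduce w).length (FreeGroup.reduce w)
      le_rfl (reduce_chain' w) h
    have : FreeGroup.mk w = (L.map FreeGroup.mk).prod := by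
      rw [← mk_flatten, hLflat, FreeGroup.reduce.self]
    rw [this]
    apply Submonoid.list_prod_mem
    intro e he
    simp only [List.mem_map] at he
    obtain ⟨B, hB, rfl⟩ := he
    obtain ⟨k, hk | hk⟩ := hLmem B hB
    · subst hk
      exact Submonoid.subset_closure ⟨(k : ℤ), (mk_Wp k).symm⟩
    · subst hk
      exact Submonoid.subset_closure ⟨(-(k + 1) : ℤ), (mk_Wm k).symm⟩
/-! ### Boolean decision procedure -/

def step (x : Bool × Bool) (r : List (Bool × Bool)) : List (Bool × Bool) :=
  match r with
  | [] => [x]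
  | y :: t => if x.1 = y.1 ∧ x.2 = !y.2 then t else x :: y :: t

theorem reduce_eq_foldr : ∀ L : List (Bool × Bool),
    FreeGroup.reduce L = List.foldr step [] L := by
  intro L
  induction L with
  | nil => rfl
  | cons x t ih =>
    rw [FreeGroup.reduce.cons, ih, List.foldr_cons]
    cases List.foldr step [] t <;> rfl

def headOK (r : List (Bool × Bool)) : Bool :=
  match r.head? with
  | none => true
  | some p => p.2

theorem headOK_iff (r : List (Bool × Bool)) :
    headOK r = true ↔ ∀ p ∈ r.head?, p.2 = true := by
  cases r <;> simp [headOK]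

def scanf (a : Bool × Bool) (s : Bool × Option (Bool × Bool)) : Bool × Option (Bool × Bool) :=
  (s.1 && (match s.2 with
    | none => true
    | some b => cond a.2 true b.2), some a)

theorem scan_spec : ∀ r : List (Bool × Bool),
    (List.foldr scanf (true, none) r).2 = r.head? ∧
      ((List.foldr scanf (true, none) r).1 = true ↔ List.Chain' SRel r) := by
  intro r
  induction r with
  | nil => exact ⟨rfl, by simp; exact List.isChain_nil⟩
  | cons a t ih =>
    obtain ⟨ih2, ih1⟩ := ih
    constructor
    · rfl
    · rw [List.foldr_cons]; unfold List.Chain'; rw [List.isChain_cons]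
      show ((List.foldr scanf (true, none) t).1 && _) = true ↔ _
      rw [Bool.and_eq_true, ih1, ih2]
      rw [and_comm]
      refine and_congr ?_ Iff.rfl
      cases ht : t.head? with
      | none => simp
      | some b =>
        cases ha : a.2 <;> cases hb : b.2 <;> simp [SRel, ha, hb]

def chainOK (r : List (Bool × Bool)) : Bool := (List.foldr scanf (true, none) r).1

def condB (w : List (Bool × Bool)) : Bool :=
  headOK (List.foldr step [] w) &&
    (headOK (List.foldr step [] w).reverse && chainOK (List.foldr step [] w))

theorem condB_iff (w : List (Bool × Bool)) :
    condB w = true ↔ Cond (FreeGroup.reduce w) := by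
  rw [condB, Bool.and_eq_true, Bool.and_eq_true, Cond, reduce_eq_foldr]
  rw [headOK_iff, headOK_iff]
  apply and_congr_right
  intro _
  apply and_congr
  · constructor
    · intro h p hp
      exact h p (by rwa [List.head?_reverse])
    · intro h p hp
      exact h p (by rwa [List.head?_reverse] at hp)
  · exact (scan_spec _).2

theorem primrec_step : Primrec₂ step := by
  have hh : Primrec₂ (fun (a : (Bool × Bool) × List (Bool × Bool))
      (p : (Bool × Bool) × List (Bool × Bool)) =>
      if a.1.1 = p.1.1 ∧ a.1.2 = !p.1.2 then p.2 else a.1 :: p.1 :: p.2) := by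
    apply Primrec.ite
    · apply PrimrecPred.and
      · exact Primrec.eq.comp (Primrec.fst.comp (Primrec.fst.comp Primrec.fst))
          (Primrec.fst.comp (Primrec.fst.comp Primrec.snd))
      · exact Primrec.eq.comp (Primrec.snd.comp (Primrec.fst.comp Primrec.fst))
          ((Primrec.dom_bool (fun b => !b)).comp
            (Primrec.snd.comp (Primrec.fst.comp Primrec.snd)))
    · exact Primrec.snd.comp Primrec.snd
    · exact Primrec.list_cons.comp (Primrec.fst.comp Primrec.fst)
        (Primrec.list_cons.comp (Primrec.fst.comp Primrec.snd)
          (Primrec.snd.comp Primrec.snd))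
  have hg : Primrec fun a : (Bool × Bool) × List (Bool × Bool) => [a.1] :=
    Primrec.list_cons.comp Primrec.fst (Primrec.const [])
  have h := Primrec.list_casesOn (f := fun a : (Bool × Bool) × List (Bool × Bool) => a.2)
    Primrec.snd hg hh
  exact h.of_eq fun ⟨x, r⟩ => by cases r <;> rfl

theorem primrec_red : Primrec fun w : List (Bool × Bool) => List.foldr step [] w := by
  have := Primrec.list_foldr (f := fun w : List (Bool × Bool) => w)
    (g := fun _ => ([] : List (Bool × Bool)))
    (h := fun _ p => step p.1 p.2) Primrec.id (Primrec.const [])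
    (primrec_step.comp (Primrec.fst.comp Primrec.snd) (Primrec.snd.comp Primrec.snd)).to₂
  exact this

theorem primrec_headOK : Primrec headOK := by
  have h := Primrec.option_casesOn (o := fun r : List (Bool × Bool) => r.head?)
    (f := fun _ => true) (g := fun _ p => p.2)
    Primrec.list_head? (Primrec.const true) ((Primrec.snd.comp Primrec.snd).to₂)
  exact h.of_eq fun r => by cases hr : r.head? <;> simp [headOK, hr]

theorem primrec_scanf : Primrec₂ scanf := by
  have hg : Primrec₂ fun (a : (Bool × Bool) × (Bool × Option (Bool × Bool)))
      (b : Bool × Bool) => cond a.1.2 true b.2 :=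
    Primrec.cond (Primrec.snd.comp (Primrec.fst.comp Primrec.fst))
      (Primrec.const true) (Primrec.snd.comp Primrec.snd)
  have hin := Primrec.option_casesOn
    (o := fun a : (Bool × Bool) × (Bool × Option (Bool × Bool)) => a.2.2)
    (f := fun _ => true) (g := fun a b => cond a.1.2 true b.2)
    (Primrec.snd.comp Primrec.snd) (Primrec.const true) hg
  have h := Primrec.pair
    (Primrec.cond (Primrec.fst.comp Primrec.snd) hin (Primrec.const false))
    (Primrec.option_some.comp Primrec.fst)
  exact h.of_eq fun ⟨a, s⟩ => by
    obtain ⟨s1, s2⟩ := s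
    cases s2 <;> cases s1 <;> rfl

theorem primrec_chainOK : Primrec chainOK := by
  have h : Primrec fun r : List (Bool × Bool) =>
      (List.foldr scanf (true, none) r) :=
    Primrec.list_foldr Primrec.id (Primrec.const (true, none))
      ((primrec_scanf.comp (Primrec.fst.comp Primrec.snd)
        (Primrec.snd.comp Primrec.snd)).to₂)
  exact Primrec.fst.comp h

theorem primrec_condB : Primrec condB := by
  have hand : Primrec₂ (fun a b : Bool => a && b) := Primrec.dom_bool₂ _
  apply Primrec.of_eq
    (f := fun w => (headOK (List.foldr step [] w) &&
      (headOK (List.foldr step [] w).reverse && chainOK (List.foldr step [] w))))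
  · apply hand.comp
    · exact primrec_headOK.comp primrec_red
    · apply hand.comp
      · exact primrec_headOK.comp (Primrec.list_reverse.comp primrec_red)
      · exact primrec_chainOK.comp primrec_red
  · intro w
    rfl
theorem decide_eq_of_iff (q : Prop) (inst : Decidable q) (b : Bool) (hqb : q ↔ b = true) :
    @decide q inst = b := by
  cases b
  · exact decide_eq_false (by simp [hqb])
  · exact decide_eq_true (by simp [hqb])

end Stmt13

/-- With `θ` the automorphism of `F(a₀,a₁)` given by `θ(a₀)=a₁`,
`θ(a₁)=a₁a₀⁻¹a₁` (`a₀ = of false`, `a₁ = of true`) and `N` the submonoid generated by the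
orbit `X = {θ^i(a₀) : i ∈ ℤ}`: membership in `N` is decidable; moreover `γ ∈ N` iff `γ` is
a product of orbit elements each of reduced length at most the reduced length of `γ`, and
there are only finitely many such candidate products. -/
theorem stmt13 (θ : MulAut (FreeGroup Bool))
    (h0 : θ (FreeGroup.of false) = FreeGroup.of true)
    (h1 : θ (FreeGroup.of true) =
      FreeGroup.of true * (FreeGroup.of false)⁻¹ * FreeGroup.of true) :
    ComputablePred (fun w : List (Bool × Bool) =>
      FreeGroup.mk w ∈
        Submonoid.closure (Set.range fun i : ℤ => (θ ^ i) (FreeGroup.of false))) ∧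
    (∀ γ : FreeGroup Bool,
      (γ ∈ Submonoid.closure (Set.range fun i : ℤ => (θ ^ i) (FreeGroup.of false)) ↔
        ∃ l : List (FreeGroup Bool),
          (∀ g ∈ l, (∃ i : ℤ, (θ ^ i) (FreeGroup.of false) = g) ∧
            g.toWord.length ≤ γ.toWord.length) ∧
          l.prod = γ) ∧
      {l : List (FreeGroup Bool) |
        (∀ g ∈ l, (∃ i : ℤ, (θ ^ i) (FreeGroup.of false) = g) ∧
          g.toWord.length ≤ γ.toWord.length) ∧ l.prod = γ}.Finite) := by
  have horb : ∀ e : FreeGroup Bool,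
      (∃ i : ℤ, (θ ^ i) (FreeGroup.of false) = e) ↔
        ∃ n : ℤ, Stmt13.gg ^ n * Stmt13.a1 = e := by
    intro e
    constructor
    · rintro ⟨i, rfl⟩
      exact ⟨i - 1, (Stmt13.orbit_eq θ h0 h1 i).symm⟩
    · rintro ⟨n, rfl⟩
      refine ⟨n + 1, ?_⟩
      rw [Stmt13.orbit_eq θ h0 h1]
      norm_num
  have hcl : (Submonoid.closure (Set.range fun i : ℤ => (θ ^ i) (FreeGroup.of false)))
      = Stmt13.N' := by
    unfold Stmt13.N'
    rw [Stmt13.range_eq θ h0 h1]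
  refine ⟨?_, fun γ => ⟨?_, ?_⟩⟩
  · have hiff : ∀ w : List (Bool × Bool),
        (FreeGroup.mk w ∈
          Submonoid.closure (Set.range fun i : ℤ => (θ ^ i) (FreeGroup.of false))) ↔
          Stmt13.condB w = true := by
      intro w
      rw [hcl, Stmt13.mem_N'_iff_cond, ← Stmt13.condB_iff]
    refine ⟨fun w => decidable_of_iff _ (hiff w).symm, ?_⟩
    exact (Stmt13.primrec_condB.to_comp).of_eq fun w =>
      (Stmt13.decide_eq_of_iff _ _ _ (hiff w)).symm
  · constructor
    · intro h
      rw [hcl] at h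
      obtain ⟨l, hl, hp⟩ := Stmt13.mem_N'_iff.1 h
      refine ⟨l, fun e he => ⟨(horb e).2 (hl e he), ?_⟩, hp⟩
      have := Stmt13.factor_len_le hl he
      rwa [hp] at this
    · rintro ⟨l, hl, rfl⟩
      rw [hcl]
      exact Stmt13.mem_N'_iff.2 ⟨l, fun e he => (horb e).1 (hl e he).1, rfl⟩
  · have hset : {l : List (FreeGroup Bool) |
        (∀ g ∈ l, (∃ i : ℤ, (θ ^ i) (FreeGroup.of false) = g) ∧
          g.toWord.length ≤ γ.toWord.length) ∧ l.prod = γ} =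
        {l : List (FreeGroup Bool) |
          (∀ e ∈ l, (∃ n : ℤ, Stmt13.gg ^ n * Stmt13.a1 = e) ∧
            e.toWord.length ≤ γ.toWord.length) ∧ l.prod = γ} := by
      ext l
      simp only [Set.mem_setOf_eq, horb]
    rw [hset]
    exact Stmt13.candidates_finite γ
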